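/- Lower bound on the force estimation accuracy: Under the hypotheses of the mean-squared-error formula — e ∈ ℝ^n, f ∈ ℝ^m, w ∈ ℝ^n, v ∈ ℝ^p square-integrable random vectors with E[e fᵀ] = 0, E[e wᵀ] = 0, E[e vᵀ] = 0, E[f wᵀ] = 0, E[f vᵀ] = 0, E[w vᵀ] = 0 (entrywise, together with transposed identities); M ∈ ℝ^{m×p}, H ∈ ℝ^{p×n}, A ∈ ℝ^{n×n}, B ∈ ℝ^{n×m} with M H B = I_m; f̂ := M[H A e + H B f + H w + v]; Q := E[w wᵀ]; R := E[v vᵀ] — the matrix ε_f² − M H Q Hᵀ Mᵀ − M R Mᵀ is positive semidefinite, where ε_f² := E[(f̂ − f)(f̂ − f)ᵀ]. In particular, for every μ ∈ ℝ^m, μᵀ ε_f² μ ≥ μᵀ (M H Q Hᵀ Mᵀ + M R Mᵀ) μ. -/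

import Mathlib

open MeasureTheory Matrix

/-- Entrywise outer-product expectation `E[u zᵀ]` of two random vectors. -/
noncomputable def outerExp {Ω : Type*} [MeasurableSpace Ω] (μ : Measure Ω)
    {a b : ℕ} (u : Ω → Fin a → ℝ) (z : Ω → Fin b → ℝ) : Matrix (Fin a) (Fin b) ℝ :=
  Matrix.of fun i j => ∫ ω, u ω i * z ω j ∂μ

section Aux

variable {Ω : Type*} [MeasurableSpace Ω] {μ : Measure Ω}

lemma memL2_mul_integrable {f g : Ω → ℝ} (hf : MemLp f 2 μ) (hg : MemLp g 2 μ) :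
    Integrable (fun ω => f ω * g ω) μ := by
  have h1 : Integrable (fun ω => (f ω + g ω) ^ 2) μ := (hf.add hg).integrable_sq
  have h2 : Integrable (fun ω => f ω ^ 2) μ := hf.integrable_sq
  have h3 : Integrable (fun ω => g ω ^ 2) μ := hg.integrable_sq
  have : Integrable (fun ω => ((f ω + g ω) ^ 2 - f ω ^ 2 - g ω ^ 2) / 2) μ :=
    ((h1.sub h2).sub h3).div_const 2
  convert this using 2 with ω
  ring

lemma mulVec_entry_memL2 {a b : ℕ} (C : Matrix (Fin a) (Fin b) ℝ) {u : Ω → Fin b → ℝ}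
    (hu : ∀ i, MemLp (fun ω => u ω i) 2 μ) (i : Fin a) :
    MemLp (fun ω => (C *ᵥ u ω) i) 2 μ := by
  have := memLp_finset_sum' (μ := μ) Finset.univ
    (fun k (_ : k ∈ Finset.univ) => (hu k).const_mul (C i k))
  simp only [mulVec, dotProduct]
  have h2 : (fun ω => ∑ k, C i k * u ω k) = ∑ k : Fin b, fun ω => C i k * u ω k := by
    funext ω; simp
  rw [h2]; exact this

lemma outerExp_mulVec_left {a b c : ℕ} (C : Matrix (Fin a) (Fin b) ℝ)
    (u : Ω → Fin b → ℝ) (z : Ω → Fin c → ℝ)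
    (hu : ∀ i, MemLp (fun ω => u ω i) 2 μ) (hz : ∀ j, MemLp (fun ω => z ω j) 2 μ) :
    outerExp μ (fun ω => C *ᵥ u ω) z = C * outerExp μ u z := by
  ext i j
  simp only [outerExp, of_apply, mul_apply, mulVec, dotProduct]
  have hint : ∀ k : Fin b, Integrable (fun ω => C i k * (u ω k * z ω j)) μ :=
    fun k => (memL2_mul_integrable (hu k) (hz j)).const_mul _
  calc ∫ ω, (∑ k, C i k * u ω k) * z ω j ∂μ
      = ∫ ω, ∑ k, C i k * (u ω k * z ω j) ∂μ := by
        congr 1; funext ω; rw [Finset.sum_mul]; exact Finset.sum_congr rfl fun k _ => by ring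
    _ = ∑ k, ∫ ω, C i k * (u ω k * z ω j) ∂μ := integral_finset_sum _ fun k _ => hint k
    _ = ∑ k, C i k * ∫ ω, u ω k * z ω j ∂μ := by
        exact Finset.sum_congr rfl fun k _ => integral_const_mul _ _

lemma outerExp_mulVec_right {a b c : ℕ} (C : Matrix (Fin a) (Fin b) ℝ)
    (u : Ω → Fin c → ℝ) (z : Ω → Fin b → ℝ)
    (hu : ∀ i, MemLp (fun ω => u ω i) 2 μ) (hz : ∀ j, MemLp (fun ω => z ω j) 2 μ) :
    outerExp μ u (fun ω => C *ᵥ z ω) = outerExp μ u z * Cᵀ := by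
  ext i j
  simp only [outerExp, of_apply, mul_apply, mulVec, dotProduct, transpose_apply]
  have hint : ∀ k : Fin b, Integrable (fun ω => C j k * (u ω i * z ω k)) μ :=
    fun k => (memL2_mul_integrable (hu i) (hz k)).const_mul _
  calc ∫ ω, u ω i * ∑ k, C j k * z ω k ∂μ
      = ∫ ω, ∑ k, C j k * (u ω i * z ω k) ∂μ := by
        congr 1; funext ω; rw [Finset.mul_sum]; exact Finset.sum_congr rfl fun k _ => by ring
    _ = ∑ k, ∫ ω, C j k * (u ω i * z ω k) ∂μ := integral_finset_sum _ fun k _ => hint k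
    _ = ∑ k, (∫ ω, u ω i * z ω k ∂μ) * C j k := by
        exact Finset.sum_congr rfl fun k _ => by rw [integral_const_mul]; ring

lemma outerExp_add_left {a b : ℕ} (u u' : Ω → Fin a → ℝ) (z : Ω → Fin b → ℝ)
    (hu : ∀ i, MemLp (fun ω => u ω i) 2 μ) (hu' : ∀ i, MemLp (fun ω => u' ω i) 2 μ)
    (hz : ∀ j, MemLp (fun ω => z ω j) 2 μ) :
    outerExp μ (fun ω => u ω + u' ω) z = outerExp μ u z + outerExp μ u' z := by
  ext i j
  simp only [outerExp, of_apply, Matrix.add_apply, Pi.add_apply]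
  rw [← integral_add (memL2_mul_integrable (hu i) (hz j))
    (memL2_mul_integrable (hu' i) (hz j))]
  congr 1; funext ω; ring

lemma outerExp_add_right {a b : ℕ} (u : Ω → Fin a → ℝ) (z z' : Ω → Fin b → ℝ)
    (hu : ∀ i, MemLp (fun ω => u ω i) 2 μ) (hz : ∀ j, MemLp (fun ω => z ω j) 2 μ)
    (hz' : ∀ j, MemLp (fun ω => z' ω j) 2 μ) :
    outerExp μ u (fun ω => z ω + z' ω) = outerExp μ u z + outerExp μ u z' := by
  ext i j
  simp only [outerExp, of_apply, Matrix.add_apply, Pi.add_apply]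
  rw [← integral_add (memL2_mul_integrable (hu i) (hz j))
    (memL2_mul_integrable (hu i) (hz' j))]
  congr 1; funext ω; ring

lemma outerExp_self_posSemidef {a : ℕ} {g : Ω → Fin a → ℝ}
    (hg : ∀ i, MemLp (fun ω => g ω i) 2 μ) :
    (outerExp μ g g).PosSemidef := by
  refine posSemidef_iff_dotProduct_mulVec.mpr ⟨?_, ?_⟩
  · ext i j
    simp only [outerExp, IsHermitian, conjTranspose_apply, of_apply, star_trivial]
    congr 1; funext ω; ring
  · intro x
    have hint : ∀ i j : Fin a, Integrable (fun ω => x i * g ω i * (x j * g ω j)) μ := by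
      intro i j
      have := (memL2_mul_integrable (hg i) (hg j)).const_mul (x i * x j)
      convert this using 2 with ω; ring
    have key : star x ⬝ᵥ (outerExp μ g g *ᵥ x) = ∫ ω, (∑ i, x i * g ω i) ^ 2 ∂μ := by
      simp only [dotProduct, mulVec, outerExp, of_apply, star_trivial]
      calc ∑ i, x i * ∑ j, (∫ ω, g ω i * g ω j ∂μ) * x j
          = ∑ i, ∑ j, ∫ ω, x i * g ω i * (x j * g ω j) ∂μ := by
            refine Finset.sum_congr rfl fun i _ => ?_
            rw [Finset.mul_sum]
            refine Finset.sum_congr rfl fun j _ => ?_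
            rw [← integral_mul_const, ← integral_const_mul]
            congr 1; funext ω; ring
        _ = ∑ i, ∫ ω, ∑ j, x i * g ω i * (x j * g ω j) ∂μ := by
            refine Finset.sum_congr rfl fun i _ => ?_
            rw [integral_finset_sum _ fun j _ => hint i j]
        _ = ∫ ω, ∑ i, ∑ j, x i * g ω i * (x j * g ω j) ∂μ := by
            rw [integral_finset_sum _ fun i _ =>
              integrable_finset_sum _ fun j _ => hint i j]
        _ = ∫ ω, (∑ i, x i * g ω i) ^ 2 ∂μ := by
            congr 1; funext ω
            rw [sq, Finset.sum_mul_sum]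
    rw [key]
    exact integral_nonneg fun ω => sq_nonneg _

end Aux

/-- Lower bound on the force estimation accuracy. -/
theorem force_estimation_accuracy_lower_bound
    {Ω : Type*} [MeasurableSpace Ω] (μ : Measure Ω) [IsProbabilityMeasure μ]
    {n m p : ℕ}
    (e : Ω → Fin n → ℝ) (f : Ω → Fin m → ℝ) (w : Ω → Fin n → ℝ) (v : Ω → Fin p → ℝ)
    (he : ∀ i, MemLp (fun ω => e ω i) 2 μ)
    (hf : ∀ i, MemLp (fun ω => f ω i) 2 μ)
    (hw : ∀ i, MemLp (fun ω => w ω i) 2 μ)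
    (hv : ∀ i, MemLp (fun ω => v ω i) 2 μ)
    (hef : outerExp μ e f = 0) (hfe : outerExp μ f e = 0)
    (hew : outerExp μ e w = 0) (hwe : outerExp μ w e = 0)
    (hev : outerExp μ e v = 0) (hve : outerExp μ v e = 0)
    (hfw : outerExp μ f w = 0) (hwf : outerExp μ w f = 0)
    (hfv : outerExp μ f v = 0) (hvf : outerExp μ v f = 0)
    (hwv : outerExp μ w v = 0) (hvw : outerExp μ v w = 0)
    (M : Matrix (Fin m) (Fin p) ℝ) (H : Matrix (Fin p) (Fin n) ℝ)
    (A : Matrix (Fin n) (Fin n) ℝ) (B : Matrix (Fin n) (Fin m) ℝ)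
    (hMHB : M * H * B = (1 : Matrix (Fin m) (Fin m) ℝ))
    (fhat : Ω → Fin m → ℝ)
    (hfhat : ∀ ω, fhat ω = M *ᵥ (H *ᵥ (A *ᵥ e ω) + H *ᵥ (B *ᵥ f ω) + H *ᵥ w ω + v ω)) :
    (outerExp μ (fun ω => fhat ω - f ω) (fun ω => fhat ω - f ω)
        - M * H * outerExp μ w w * Hᵀ * Mᵀ - M * outerExp μ v v * Mᵀ).PosSemidef ∧
      ∀ u : Fin m → ℝ,
        u ⬝ᵥ ((M * H * outerExp μ w w * Hᵀ * Mᵀ + M * outerExp μ v v * Mᵀ) *ᵥ u) ≤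
          u ⬝ᵥ (outerExp μ (fun ω => fhat ω - f ω) (fun ω => fhat ω - f ω) *ᵥ u) := by
  -- decompose the error
  have herr : ∀ ω, fhat ω - f ω =
      (M * H * A) *ᵥ e ω + ((M * H) *ᵥ w ω + M *ᵥ v ω) := by
    intro ω
    rw [hfhat ω]
    have h1 : M *ᵥ (H *ᵥ (B *ᵥ f ω)) = f ω := by
      rw [mulVec_mulVec, mulVec_mulVec, hMHB, one_mulVec]
    have h2 : M *ᵥ (H *ᵥ (A *ᵥ e ω)) = (M * H * A) *ᵥ e ω := by
      rw [mulVec_mulVec, mulVec_mulVec]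
    have h3 : M *ᵥ (H *ᵥ w ω) = (M * H) *ᵥ w ω := by rw [mulVec_mulVec]
    simp only [mulVec_add, h1, h2, h3]
    abel
  -- MemLp facts
  have hg1 : ∀ i, MemLp (fun ω => ((M * H * A) *ᵥ e ω) i) 2 μ :=
    mulVec_entry_memL2 _ he
  have hg2 : ∀ i, MemLp (fun ω => ((M * H) *ᵥ w ω) i) 2 μ :=
    mulVec_entry_memL2 _ hw
  have hg3 : ∀ i, MemLp (fun ω => (M *ᵥ v ω) i) 2 μ :=
    mulVec_entry_memL2 _ hv
  have hg23 : ∀ i, MemLp (fun ω => ((M * H) *ᵥ w ω + M *ᵥ v ω) i) 2 μ :=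
    fun i => (hg2 i).add (hg3 i)
  -- expand the outer expectation
  set Q := outerExp μ w w with hQ
  set R := outerExp μ v v with hR
  have hexp : outerExp μ (fun ω => fhat ω - f ω) (fun ω => fhat ω - f ω) =
      outerExp μ (fun ω => (M * H * A) *ᵥ e ω) (fun ω => (M * H * A) *ᵥ e ω)
        + (M * H * Q * Hᵀ * Mᵀ + M * R * Mᵀ) := by
    have hfn : (fun ω => fhat ω - f ω) =
        fun ω => (M * H * A) *ᵥ e ω + ((M * H) *ᵥ w ω + M *ᵥ v ω) := funext herr
    rw [hfn]
    rw [outerExp_add_left (fun ω => (M * H * A) *ᵥ e ω)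
        (fun ω => (M * H) *ᵥ w ω + M *ᵥ v ω)
        (fun ω => (M * H * A) *ᵥ e ω + ((M * H) *ᵥ w ω + M *ᵥ v ω))
        hg1 hg23 (fun i => (hg1 i).add (hg23 i))]
    rw [outerExp_add_right (fun ω => (M * H * A) *ᵥ e ω)
        (fun ω => (M * H * A) *ᵥ e ω) (fun ω => (M * H) *ᵥ w ω + M *ᵥ v ω)
        hg1 hg1 hg23]
    rw [outerExp_add_right (fun ω => (M * H) *ᵥ w ω + M *ᵥ v ω)
        (fun ω => (M * H * A) *ᵥ e ω) (fun ω => (M * H) *ᵥ w ω + M *ᵥ v ω)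
        hg23 hg1 hg23]
    rw [outerExp_add_left (fun ω => (M * H) *ᵥ w ω) (fun ω => M *ᵥ v ω)
        (fun ω => (M * H * A) *ᵥ e ω) hg2 hg3 hg1]
    rw [outerExp_add_left (fun ω => (M * H) *ᵥ w ω) (fun ω => M *ᵥ v ω)
        (fun ω => (M * H) *ᵥ w ω + M *ᵥ v ω) hg2 hg3 hg23]
    rw [outerExp_add_right (fun ω => (M * H) *ᵥ w ω)
        (fun ω => (M * H) *ᵥ w ω) (fun ω => M *ᵥ v ω) hg2 hg2 hg3]
    rw [outerExp_add_right (fun ω => M *ᵥ v ω)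
        (fun ω => (M * H) *ᵥ w ω) (fun ω => M *ᵥ v ω) hg3 hg2 hg3]
    rw [outerExp_add_right (fun ω => (M * H * A) *ᵥ e ω)
        (fun ω => (M * H) *ᵥ w ω) (fun ω => M *ᵥ v ω) hg1 hg2 hg3]
    rw [outerExp_mulVec_left (M * H * A) e (fun ω => (M * H * A) *ᵥ e ω) he hg1,
      outerExp_mulVec_right (M * H * A) e e he he,
      outerExp_mulVec_left (M * H * A) e (fun ω => (M * H) *ᵥ w ω) he hg2,
      outerExp_mulVec_right (M * H) e w he hw,
      outerExp_mulVec_left (M * H * A) e (fun ω => M *ᵥ v ω) he hg3,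
      outerExp_mulVec_right M e v he hv,
      outerExp_mulVec_left (M * H) w (fun ω => (M * H * A) *ᵥ e ω) hw hg1,
      outerExp_mulVec_right (M * H * A) w e hw he,
      outerExp_mulVec_left (M * H) w (fun ω => (M * H) *ᵥ w ω) hw hg2,
      outerExp_mulVec_right (M * H) w w hw hw,
      outerExp_mulVec_left (M * H) w (fun ω => M *ᵥ v ω) hw hg3,
      outerExp_mulVec_right M w v hw hv,
      outerExp_mulVec_left M v (fun ω => (M * H * A) *ᵥ e ω) hv hg1,
      outerExp_mulVec_right (M * H * A) v e hv he,
      outerExp_mulVec_left M v (fun ω => (M * H) *ᵥ w ω) hv hg2,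
      outerExp_mulVec_right (M * H) v w hv hw,
      outerExp_mulVec_left M v (fun ω => M *ᵥ v ω) hv hg3,
      outerExp_mulVec_right M v v hv hv]
    rw [hew, hwe, hev, hve, hwv, hvw]
    simp only [Matrix.mul_zero, Matrix.zero_mul, add_zero, zero_add]
    rw [← hQ, ← hR]
    congr 1
    congr 1
    · simp [Matrix.transpose_mul, Matrix.mul_assoc]
    · simp [Matrix.mul_assoc]
  have hkey : outerExp μ (fun ω => fhat ω - f ω) (fun ω => fhat ω - f ω)
      - M * H * Q * Hᵀ * Mᵀ - M * R * Mᵀ =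
      outerExp μ (fun ω => (M * H * A) *ᵥ e ω) (fun ω => (M * H * A) *ᵥ e ω) := by
    rw [hexp]; abel
  have hpsd := outerExp_self_posSemidef hg1
  rw [← hkey] at hpsd
  refine ⟨hpsd, fun u => ?_⟩
  have h2 := hpsd.dotProduct_mulVec_nonneg u
  simp only [star_trivial] at h2
  have : u ⬝ᵥ ((outerExp μ (fun ω => fhat ω - f ω) (fun ω => fhat ω - f ω)
      - M * H * Q * Hᵀ * Mᵀ - M * R * Mᵀ) *ᵥ u) =
      u ⬝ᵥ (outerExp μ (fun ω => fhat ω - f ω) (fun ω => fhat ω - f ω) *ᵥ u)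
        - u ⬝ᵥ ((M * H * Q * Hᵀ * Mᵀ + M * R * Mᵀ) *ᵥ u) := by
    simp [Matrix.sub_mulVec, Matrix.add_mulVec, dotProduct_sub, dotProduct_add]
    ring
  rw [this] at h2
  linarith
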